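/- arXiv:1705.08681 — 5 statements merged into one kernel-verified Lean document; each statement's English description precedes it below -/
import Mathlib

section
/- For a cycle C_n on an odd number n ≥ 3 of vertices, the fixatic number equals ⌊n/2⌋. -/
open SimpleGraph

def IsFixingSet {V : Type*} (G : SimpleGraph V) (F : Set V) : Prop :=
  ∀ φ : G ≃g G, (∀ v ∈ F, φ v = v) → ∀ v, φ v = v

noncomputable def fixingNumber {V : Type*} (G : SimpleGraph V) [Fintype V] : ℕ :=
  sInf {n | ∃ F : Finset V, F.card = n ∧ IsFixingSet G ↑F}

def IsFixaticPartition {V : Type*} [Fintype V] [DecidableEq V] (G : SimpleGraph V)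
    (P : Finpartition (Finset.univ : Finset V)) : Prop :=
  ∀ F ∈ P.parts, IsFixingSet G ↑F

noncomputable def fixaticNumber {V : Type*} (G : SimpleGraph V) [Fintype V] [DecidableEq V] : ℕ :=
  sSup {k | ∃ P : Finpartition (Finset.univ : Finset V), IsFixaticPartition G P ∧ P.parts.card = k}

/-! ### Auxiliary lemmas -/

section Aux

open Finset
open Fin.CommRing Fin.NatCast

lemma aux_two_ne_zero (m : ℕ) : (2 : Fin (m+3)) ≠ 0 := by
  intro h
  have := congrArg Fin.val h
  simp [Fin.val_two] at this
  rw [Nat.mod_eq_of_lt (by omega)] at this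
  omega

lemma aux_adj_iff {m : ℕ} {u v : Fin (m+3)} :
    (cycleGraph (m+3)).Adj u v ↔ u - v = 1 ∨ v - u = 1 := cycleGraph_adj

lemma aux_step {m : ℕ} (φ : cycleGraph (m+3) ≃g cycleGraph (m+3)) (ε : Fin (m+3))
    (hε : ε = 1 ∨ ε = -1) (b : Fin (m+3)) (h : φ (b+1) = φ b + ε) :
    φ (b+2) = φ (b+1) + ε := by
  have hadj : (cycleGraph (m+3)).Adj (b+1) (b+2) := by
    rw [aux_adj_iff]; right; show b + 2 - (b+1) = 1; ring
  have h2 : (cycleGraph (m+3)).Adj (φ (b+1)) (φ (b+2)) := φ.map_adj_iff.mpr hadj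
  rw [aux_adj_iff] at h2
  have key : φ (b+2) = φ (b+1) - 1 ∨ φ (b+2) = φ (b+1) + 1 := by
    rcases h2 with h2 | h2
    · left; linear_combination -h2
    · right; linear_combination h2
  have hne : φ (b+2) ≠ φ b := by
    intro hc
    have h1 := φ.injective hc
    have h20 : (2 : Fin (m+3)) = 0 :=
      add_left_cancel (a := b) (b := (2:Fin (m+3))) (c := 0) (by simpa using h1)
    exact aux_two_ne_zero m h20
  rcases hε with rfl | rfl
  · rcases key with h2 | h2
    · exfalso; apply hne; rw [h2, h]; ring
    · exact h2
  · rcases key with h2 | h2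
    · rw [h2]; ring
    · exfalso; apply hne; rw [h2, h]; ring

lemma aux_ray {m : ℕ} (φ : cycleGraph (m+3) ≃g cycleGraph (m+3)) (ε : Fin (m+3))
    (hε : ε = 1 ∨ ε = -1) (a : Fin (m+3)) (h : φ (a+1) = φ a + ε) :
    ∀ k : ℕ, φ (a + (k:Fin (m+3))) = φ a + ε * (k : Fin (m+3)) := by
  have hstep : ∀ k : ℕ, φ (a + (k:Fin (m+3)) + 1) = φ (a + (k:Fin (m+3))) + ε := by
    intro k
    induction k with
    | zero => simpa using h
    | succ k ih =>
      have := aux_step φ ε hε (a + (k:Fin (m+3))) ih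
      have hc : ((k+1 : ℕ) : Fin (m+3)) = (k : Fin (m+3)) + 1 := by push_cast; ring
      rw [hc]
      convert this using 2 <;> ring
  intro k
  induction k with
  | zero => simp
  | succ k ih =>
    have hc : ((k+1 : ℕ) : Fin (m+3)) = (k : Fin (m+3)) + 1 := by push_cast; ring
    rw [hc, ← add_assoc, hstep k, ih]; ring

lemma aux_fixes_of_two {m : ℕ} (hodd : Odd (m+3)) (φ : cycleGraph (m+3) ≃g cycleGraph (m+3))
    {u v : Fin (m+3)} (huv : u ≠ v) (hu : φ u = u) (hv : φ v = v) : ∀ w, φ w = w := by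
  have hadj : (cycleGraph (m+3)).Adj u (u+1) := by
    rw [aux_adj_iff]; right; show u + 1 - u = 1; ring
  have h2 : (cycleGraph (m+3)).Adj (φ u) (φ (u+1)) := φ.map_adj_iff.mpr hadj
  rw [aux_adj_iff, hu] at h2
  have key : φ (u+1) = φ u + 1 ∨ φ (u+1) = φ u + (-1) := by
    rw [hu]
    rcases h2 with h2 | h2
    · right; linear_combination -h2
    · left; linear_combination h2
  have main : ∀ ε : Fin (m+3), (ε = 1 ∨ ε = -1) → φ (u+1) = φ u + ε → ε = 1 := by
    rintro ε hε h
    rcases hε with rfl | rfl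
    · rfl
    · exfalso
      have hr := aux_ray φ _ (Or.inr rfl) u h ((v - u).val)
      rw [Fin.cast_val_eq_self] at hr
      have hv' : u + (v - u) = v := by ring
      rw [hv', hu, hv] at hr
      have h2 : (2 : Fin (m+3)) * (v - u) = 0 := by linear_combination hr
      have hval := congrArg Fin.val h2
      rw [Fin.mul_def] at hval
      simp [Fin.val_two] at hval
      have hdvd : (m+3) ∣ 2 * (v - u).val := Nat.dvd_of_mod_eq_zero hval
      have hcop : Nat.Coprime (m+3) 2 := Nat.coprime_two_right.mpr hodd
      have hdvd2 : (m+3) ∣ (v - u).val := hcop.dvd_of_dvd_mul_left hdvd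
      have hlt : (v - u).val < m + 3 := (v - u).isLt
      have hne : v - u ≠ 0 := sub_ne_zero.mpr (Ne.symm huv)
      exact hne (Fin.ext (Nat.eq_zero_of_dvd_of_lt hdvd2 hlt))
  obtain ⟨ε, hε, h⟩ : ∃ ε : Fin (m+3), (ε = 1 ∨ ε = -1) ∧ φ (u+1) = φ u + ε := by
    rcases key with h | h
    · exact ⟨1, Or.inl rfl, h⟩
    · exact ⟨-1, Or.inr rfl, h⟩
  have hε1 := main ε hε h
  subst hε1
  intro w
  have hr := aux_ray φ _ (Or.inl rfl) u h ((w - u).val)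
  rw [Fin.cast_val_eq_self] at hr
  have hw : u + (w - u) = w := by ring
  rw [hw, hu] at hr
  rw [hr]; ring

/-- reflection x ↦ c - x as a graph automorphism -/
def auxRefl (m : ℕ) (c : Fin (m+3)) : cycleGraph (m+3) ≃g cycleGraph (m+3) where
  toFun := fun x => c - x
  invFun := fun x => c - x
  left_inv := fun x => by ring
  right_inv := fun x => by ring
  map_rel_iff' := by
    intro x y
    show (cycleGraph (m+3)).Adj (c - x) (c - y) ↔ _
    rw [aux_adj_iff, aux_adj_iff]
    constructor
    · rintro (h | h)
      · right; linear_combination h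
      · left; linear_combination h
    · rintro (h | h)
      · right; linear_combination h
      · left; linear_combination h

lemma aux_card_ge_two_of_fixing {m : ℕ} (F : Finset (Fin (m+3)))
    (hF : IsFixingSet (cycleGraph (m+3)) ↑F) : 2 ≤ F.card := by
  by_contra hlt
  push_neg at hlt
  have hmove : ∀ u : Fin (m+3), ∃ x, auxRefl m (u + u) x ≠ x := by
    intro u
    refine ⟨u + 1, ?_⟩
    show u + u - (u + 1) ≠ u + 1
    intro h
    apply aux_two_ne_zero m
    linear_combination -h
  interval_cases h : F.card
  · obtain ⟨x, hx⟩ := hmove 0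
    exact hx (hF (auxRefl m (0+0)) (by simp [Finset.card_eq_zero.mp h]) x)
  · obtain ⟨u, hu⟩ := Finset.card_eq_one.mp h
    obtain ⟨x, hx⟩ := hmove u
    apply hx
    apply hF (auxRefl m (u + u)) _ x
    intro v hv
    rw [hu] at hv
    simp only [Finset.coe_singleton, Set.mem_singleton_iff] at hv
    subst hv
    show v + v - v = v
    ring

lemma aux_fixing_of_card_ge_two {m : ℕ} (hodd : Odd (m+3)) (F : Finset (Fin (m+3)))
    (hF : 2 ≤ F.card) : IsFixingSet (cycleGraph (m+3)) ↑F := by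
  obtain ⟨u, hu, v, hv, huv⟩ := Finset.one_lt_card.mp hF
  intro φ hfix w
  exact aux_fixes_of_two hodd φ huv (hfix u hu) (hfix v hv) w

/-! ### The partition realizing the bound -/

def fIdx (m : ℕ) (v : Fin (m+3)) : ℕ := min (v.val / 2) ((m+3)/2 - 1)

def mySetoid (m : ℕ) : Setoid (Fin (m+3)) :=
  ⟨fun a b => fIdx m a = fIdx m b, ⟨fun _ => rfl, Eq.symm, Eq.trans⟩⟩

instance (m : ℕ) : DecidableRel (mySetoid m).r := fun _ _ => Nat.decEq _ _

noncomputable def myPart (m : ℕ) : Finpartition (univ : Finset (Fin (m+3))) :=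
  Finpartition.ofSetoid (mySetoid m)

lemma myPart_parts (m : ℕ) :
    (myPart m).parts = univ.image fun a => univ.filter (fun b => fIdx m a = fIdx m b) := by
  rfl

lemma parts_card_ge (m : ℕ) (hodd : Odd (m+3)) :
    ∀ p ∈ (myPart m).parts, 2 ≤ p.card := by
  intro p hp
  rw [myPart_parts, mem_image] at hp
  obtain ⟨a, -, rfl⟩ := hp
  have h2N : 2 * ((m+3)/2) + 1 = m + 3 := by
    obtain ⟨k, hk⟩ := hodd; omega
  set N := (m+3)/2 with hN
  have hj : fIdx m a ≤ N - 1 := min_le_right _ _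
  set j := fIdx m a with hjdef
  have hx0 : 2*j < m+3 := by omega
  have hx1 : 2*j+1 < m+3 := by omega
  refine Finset.one_lt_card.mpr ⟨⟨2*j, hx0⟩, ?_, ⟨2*j+1, hx1⟩, ?_, ?_⟩
  · simp only [mem_filter, mem_univ, true_and]
    simp only [fIdx]
    omega
  · simp only [mem_filter, mem_univ, true_and]
    simp only [fIdx]
    omega
  · simp [Fin.ext_iff]

lemma parts_card_eq (m : ℕ) (hodd : Odd (m+3)) :
    (myPart m).parts.card = (m+3)/2 := by
  have h2N : 2 * ((m+3)/2) + 1 = m + 3 := by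
    obtain ⟨k, hk⟩ := hodd; omega
  set N := (m+3)/2 with hN
  rw [myPart_parts]
  have himage : univ.image (fIdx m) = Finset.range N := by
    ext j
    simp only [mem_image, Finset.mem_range, mem_univ, true_and]
    constructor
    · rintro ⟨v, rfl⟩
      have := min_le_right (v.val / 2) (N - 1)
      simp only [fIdx]
      omega
    · intro hj
      refine ⟨⟨2*j, by omega⟩, ?_⟩
      simp only [fIdx]
      omega
  have hcomp : (univ.image fun a => univ.filter (fun b => fIdx m a = fIdx m b))
      = (univ.image (fIdx m)).image (fun j => univ.filter (fun b => j = fIdx m b)) := by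
    rw [Finset.image_image]
    rfl
  rw [hcomp, Finset.card_image_of_injOn, himage, Finset.card_range]
  intro j hj j' hj' h
  simp only [coe_image, Set.mem_image, mem_coe] at hj hj'
  obtain ⟨v, -, rfl⟩ := hj
  simp only at h
  have hv : v ∈ univ.filter (fun b => fIdx m v = fIdx m b) := by simp
  rw [h] at hv
  exact (mem_filter.mp hv).2.symm

end Aux

theorem stmt8 (n : ℕ) (hn : 3 ≤ n) (hodd : Odd n) :
    fixaticNumber (SimpleGraph.cycleGraph n) = n / 2 := by
  obtain ⟨m, rfl⟩ : ∃ m, n = m + 3 := ⟨n - 3, by omega⟩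
  set A := {k | ∃ P : Finpartition (Finset.univ : Finset (Fin (m+3))),
    IsFixaticPartition (cycleGraph (m+3)) P ∧ P.parts.card = k} with hA
  have hmem : (m+3)/2 ∈ A := by
    refine ⟨myPart m, ?_, parts_card_eq m hodd⟩
    intro p hp
    exact aux_fixing_of_card_ge_two hodd p (parts_card_ge m hodd p hp)
  have hub : ∀ k ∈ A, k ≤ (m+3)/2 := by
    rintro k ⟨P, hPfix, rfl⟩
    have hparts : ∀ p ∈ P.parts, 2 ≤ p.card := fun p hp =>
      aux_card_ge_two_of_fixing p (hPfix p hp)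
    have hsum : P.parts.card * 2 ≤ ∑ p ∈ P.parts, p.card := by
      calc P.parts.card * 2 = ∑ _p ∈ P.parts, 2 := by
            rw [Finset.sum_const, smul_eq_mul]
        _ ≤ ∑ p ∈ P.parts, p.card := Finset.sum_le_sum hparts
    rw [P.sum_card_parts, Finset.card_univ, Fintype.card_fin] at hsum
    omega
  refine le_antisymm (csSup_le ⟨_, hmem⟩ hub) (le_csSup ⟨(m+3)/2, hub⟩ hmem)
end

section
/- For the path P_{2k} on an even number 2k of vertices (k ≥ 1), the fixatic number equals 2k, i.e., the partition of the vertex set into singletons is a fixatic partition. -/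
open SimpleGraph

lemma path_aut_aff (n : ℕ) (φ : pathGraph n ≃g pathGraph n) :
    (∀ i : Fin n, (φ i : ℕ) = i) ∨ (∀ i : Fin n, (φ i : ℕ) = n - 1 - i) := by
  rcases Nat.lt_or_ge n 2 with hn | hn
  · -- n = 0 or 1 : both trivial
    left
    intro i
    omega
  -- n ≥ 2
  set g : ℕ → ℤ := fun i => if h : i < n then ((φ ⟨i, h⟩ : Fin n) : ℤ) else 0 with hg
  have h0 : (0 : ℕ) < n := by omega
  have h1 : (1 : ℕ) < n := hn
  set d : ℤ := g 1 - g 0 with hd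
  have adj_step : ∀ i : ℕ, i + 1 < n → g (i + 1) - g i = 1 ∨ g (i + 1) - g i = -1 := by
    intro i hi
    have hadj : (pathGraph n).Adj ⟨i, by omega⟩ ⟨i + 1, hi⟩ := by
      rw [pathGraph_adj]; left; rfl
    have := φ.map_adj_iff.mpr hadj
    rw [pathGraph_adj] at this
    simp only [hg]
    rw [dif_pos hi, dif_pos (show i < n by omega)]
    rcases this with h | h
    · left
      have := congrArg (Int.ofNat) h
      push_cast at this ⊢
      omega
    · right
      have := congrArg (Int.ofNat) h
      push_cast at this ⊢
      omega
  have hdval : d = 1 ∨ d = -1 := adj_step 0 h1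
  have inj : ∀ i j : ℕ, (hi : i < n) → (hj : j < n) → g i = g j → i = j := by
    intro i j hi hj hij
    simp only [hg, dif_pos hi, dif_pos hj] at hij
    have : φ ⟨i, hi⟩ = φ ⟨j, hj⟩ := by
      apply Fin.ext
      exact_mod_cast hij
    have := φ.injective this
    exact congrArg Fin.val this
  have key : ∀ i : ℕ, i < n → g i = g 0 + i * d := by
    intro i
    induction i using Nat.strong_induction_on with
    | _ i ih =>
      intro hi
      match i with
      | 0 => simp
      | 1 => rw [hd]; push_cast; ring
      | (j + 2) =>
        have hj1 : j + 1 < n := by omega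
        have hj : j < n := by omega
        have e1 := ih (j + 1) (by omega) hj1
        have hrw : g (j + 1 + 1) = g (j + 2) := rfl
        have e0 := ih j (by omega) hj
        rcases adj_step (j + 1) hi with h | h <;> rw [hrw] at h
        · rcases hdval with hd1 | hd1
          · rw [hd1] at e1 ⊢; push_cast; omega
          · -- step = 1, d = -1 : g (j+2) = g j, contradiction
            exfalso
            have : g (j + 2) = g j := by rw [hd1] at e1 e0; omega
            have := inj (j + 2) j hi hj this
            omega
        · rcases hdval with hd1 | hd1
          · exfalso
            have : g (j + 2) = g j := by rw [hd1] at e1 e0; omega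
            have := inj (j + 2) j hi hj this
            omega
          · rw [hd1] at e1 ⊢; push_cast; omega
  have gbound : ∀ i : ℕ, i < n → 0 ≤ g i ∧ g i ≤ (n : ℤ) - 1 := by
    intro i hi
    simp only [hg, dif_pos hi]
    constructor
    · positivity
    · have := (φ ⟨i, hi⟩).isLt
      omega
  rcases hdval with hd1 | hd1
  · left
    intro i
    have hgl := key (n - 1) (by omega)
    have hb := gbound (n - 1) (by omega)
    rw [hd1] at hgl
    have hb0 := gbound 0 h0
    have hg00 : g 0 = 0 := by
      have : ((n : ℤ) - 1) = ((n - 1 : ℕ) : ℤ) := by omega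
      omega
    have := key i i.isLt
    rw [hd1, hg00] at this
    have : g i = (i : ℤ) := by omega
    simp only [hg, dif_pos i.isLt] at this
    have : ((φ ⟨(i : ℕ), i.isLt⟩ : Fin n) : ℤ) = (i : ℤ) := this
    have h2 : φ ⟨(i : ℕ), i.isLt⟩ = i := by
      apply Fin.ext
      exact_mod_cast this
    rw [show (⟨(i : ℕ), i.isLt⟩ : Fin n) = i from rfl] at h2
    rw [h2]
  · right
    intro i
    have hb0 := gbound 0 h0
    have hgl := key (n - 1) (by omega)
    have hb := gbound (n - 1) (by omega)
    rw [hd1] at hgl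
    have hg00 : g 0 = (n : ℤ) - 1 := by
      have : ((n - 1 : ℕ) : ℤ) = (n : ℤ) - 1 := by omega
      omega
    have := key i i.isLt
    rw [hd1, hg00] at this
    have hgi : g i = (n : ℤ) - 1 - (i : ℤ) := by omega
    simp only [hg, dif_pos i.isLt] at hgi
    have h2 : ((φ ⟨(i : ℕ), i.isLt⟩ : Fin n) : ℤ) = (n : ℤ) - 1 - (i : ℤ) := hgi
    rw [show (⟨(i : ℕ), i.isLt⟩ : Fin n) = i from rfl] at h2
    have hilt := i.isLt
    omega

lemma singleton_fixing (k : ℕ) (hk : 1 ≤ k) (v : Fin (2 * k)) :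
    IsFixingSet (SimpleGraph.pathGraph (2 * k)) {v} := by
  intro φ hfix w
  have hv : φ v = v := hfix v rfl
  rcases path_aut_aff (2 * k) φ with h | h
  · exact Fin.ext (h w)
  · exfalso
    have := h v
    rw [hv] at this
    have := v.isLt
    omega

theorem stmt12 (k : ℕ) (hk : 1 ≤ k) :
    (∀ v : Fin (2 * k), IsFixingSet (SimpleGraph.pathGraph (2 * k)) {v}) ∧
      fixaticNumber (SimpleGraph.pathGraph (2 * k)) = 2 * k := by
  refine ⟨singleton_fixing k hk, ?_⟩
  have hmem : (2 * k) ∈ {m | ∃ P : Finpartition (Finset.univ : Finset (Fin (2 * k))),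
      IsFixaticPartition (SimpleGraph.pathGraph (2 * k)) P ∧ P.parts.card = m} := by
    refine ⟨⊥, ?_, ?_⟩
    · intro F hF
      rw [Finpartition.mem_bot_iff] at hF
      obtain ⟨a, _, rfl⟩ := hF
      simpa using singleton_fixing k hk a
    · rw [Finpartition.card_bot, Finset.card_univ, Fintype.card_fin]
  have hbdd : ∀ m ∈ {m | ∃ P : Finpartition (Finset.univ : Finset (Fin (2 * k))),
      IsFixaticPartition (SimpleGraph.pathGraph (2 * k)) P ∧ P.parts.card = m}, m ≤ 2 * k := by
    rintro m ⟨P, _, rfl⟩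
    calc P.parts.card ≤ (Finset.univ : Finset (Fin (2 * k))).card := P.card_parts_le_card
      _ = 2 * k := by simp
  apply le_antisymm
  · exact csSup_le ⟨2 * k, hmem⟩ hbdd
  · exact le_csSup ⟨2 * k, hbdd⟩ hmem
end

section
/- For the star K_{1,3}, the fixatic number equals 1 while fix(K_{1,3}) = 2 = ⌊4/2⌋; in particular F_xt(G)=1 does not imply fix(G) > ⌊n/2⌋. -/
open SimpleGraph

abbrev G13 := completeBipartiteGraph (Fin 1) (Fin 3)

lemma left_swap (i j : Fin 3) (v : Fin 1 ⊕ Fin 3) :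
    ((Equiv.swap (Sum.inr i) (Sum.inr j)) v).isLeft = v.isLeft := by
  rw [Equiv.swap_apply_def]; split_ifs <;> simp_all

lemma right_swap (i j : Fin 3) (v : Fin 1 ⊕ Fin 3) :
    ((Equiv.swap (Sum.inr i) (Sum.inr j)) v).isRight = v.isRight := by
  rw [Equiv.swap_apply_def]; split_ifs <;> simp_all

def swapIso (i j : Fin 3) : G13 ≃g G13 :=
  ⟨Equiv.swap (Sum.inr i) (Sum.inr j), by
    intro a b; simp [completeBipartiteGraph, left_swap, right_swap]⟩

example : (swapIso 0 1) (Sum.inr 0) = Sum.inr 1 := by simp [swapIso]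

lemma not_fix {F : Set (Fin 1 ⊕ Fin 3)} {i j : Fin 3} (hij : i ≠ j)
    (hi : Sum.inr i ∉ F) (hj : Sum.inr j ∉ F) : ¬ IsFixingSet G13 F := by
  intro h
  have := h (swapIso i j) (fun v hv => by
    show Equiv.swap (Sum.inr i) (Sum.inr j) v = v
    rcases v with w|w
    · exact Equiv.swap_apply_of_ne_of_ne (by simp) (by simp)
    · exact Equiv.swap_apply_of_ne_of_ne (fun e => hi (e ▸ hv)) (fun e => hj (e ▸ hv)))
    (Sum.inr i)
  simp [swapIso] at this
  exact hij this.symm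

lemma two_leaves {F : Set (Fin 1 ⊕ Fin 3)} (hF : IsFixingSet G13 F) :
    ∃ i j : Fin 3, i ≠ j ∧ Sum.inr i ∈ F ∧ Sum.inr j ∈ F := by
  by_cases h0 : Sum.inr 0 ∈ F <;> by_cases h1 : Sum.inr 1 ∈ F <;>
    by_cases h2 : Sum.inr 2 ∈ F
  · exact ⟨0, 1, by decide, h0, h1⟩
  · exact ⟨0, 1, by decide, h0, h1⟩
  · exact ⟨0, 2, by decide, h0, h2⟩
  · exact absurd hF (not_fix (by decide) h1 h2)
  · exact ⟨1, 2, by decide, h1, h2⟩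
  · exact absurd hF (not_fix (by decide) h0 h2)
  · exact absurd hF (not_fix (by decide) h0 h1)
  · exact absurd hF (not_fix (by decide) h0 h1)

lemma fix_pair : IsFixingSet G13 ↑({Sum.inr 0, Sum.inr 1} : Finset (Fin 1 ⊕ Fin 3)) := by
  intro φ hφ
  have h0 : φ (Sum.inr 0) = Sum.inr 0 := hφ _ (by simp)
  have h1 : φ (Sum.inr 1) = Sum.inr 1 := hφ _ (by simp)
  have hl : φ (Sum.inl 0) = Sum.inl 0 := by
    have hadj : G13.Adj (φ (Sum.inl 0)) (Sum.inr 0) := by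
      rw [← h0]
      exact φ.map_adj_iff.mpr (by simp [completeBipartiteGraph])
    rcases hv : φ (Sum.inl 0) with a|a
    · exact congrArg Sum.inl (Subsingleton.elim a 0) ▸ hv ▸ rfl
    · rw [hv] at hadj; simp [completeBipartiteGraph] at hadj
  have h2 : φ (Sum.inr 2) = Sum.inr 2 := by
    rcases hv : φ (Sum.inr 2) with a|a
    · exact absurd (φ.injective (hv.trans ((Subsingleton.elim a 0) ▸ hl.symm))) (by simp)
    · fin_cases a
      · exact absurd (φ.injective (hv.trans h0.symm)) (by decide)
      · exact absurd (φ.injective (hv.trans h1.symm)) (by decide)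
      · rfl
  intro v
  rcases v with a|a
  · exact (Subsingleton.elim (0:Fin 1) a) ▸ hl
  · fin_cases a <;> assumption


theorem stmt13 :
    fixaticNumber (completeBipartiteGraph (Fin 1) (Fin 3)) = 1 ∧
      fixingNumber (completeBipartiteGraph (Fin 1) (Fin 3)) = 2 ∧
      ¬ fixingNumber (completeBipartiteGraph (Fin 1) (Fin 3)) >
        Fintype.card (Fin 1 ⊕ Fin 3) / 2 := by
  have h2 : (2 : ℕ) ∈ {n | ∃ F : Finset (Fin 1 ⊕ Fin 3), F.card = n ∧ IsFixingSet G13 ↑F} :=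
    ⟨{Sum.inr 0, Sum.inr 1}, by decide, fix_pair⟩
  have hlow : ∀ n ∈ {n | ∃ F : Finset (Fin 1 ⊕ Fin 3), F.card = n ∧ IsFixingSet G13 ↑F},
      2 ≤ n := by
    rintro n ⟨F, hc, hfix⟩
    obtain ⟨i, j, hij, hi, hj⟩ := two_leaves hfix
    have : 1 < F.card := Finset.one_lt_card.mpr
      ⟨_, Finset.mem_coe.mp hi, _, Finset.mem_coe.mp hj,
        fun e => hij (Sum.inr_injective e)⟩
    omega
  have hfix : fixingNumber G13 = 2 :=
    le_antisymm (Nat.sInf_le h2) (le_csInf ⟨2, h2⟩ hlow)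
  have h1 : (1 : ℕ) ∈ {k | ∃ P : Finpartition (Finset.univ : Finset (Fin 1 ⊕ Fin 3)),
      IsFixaticPartition G13 P ∧ P.parts.card = k} := by
    refine ⟨Finpartition.indiscrete (by simp [Finset.univ_nonempty.ne_empty]), ?_, ?_⟩
    · intro F hF
      rw [Finpartition.indiscrete_parts, Finset.mem_singleton] at hF
      subst hF
      intro φ hφ v
      exact hφ v (by simp)
    · simp [Finpartition.indiscrete_parts]
  have hub : ∀ k ∈ {k | ∃ P : Finpartition (Finset.univ : Finset (Fin 1 ⊕ Fin 3)),
      IsFixaticPartition G13 P ∧ P.parts.card = k}, k ≤ 1 := by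
    rintro k ⟨P, hP, rfl⟩
    by_contra hk
    obtain ⟨F1, hF1, F2, hF2, hne⟩ := Finset.one_lt_card.mp (show 1 < P.parts.card by omega)
    have hdisj : Disjoint F1 F2 :=
      P.disjoint (Finset.mem_coe.mpr hF1) (Finset.mem_coe.mpr hF2) hne
    obtain ⟨i1, j1, hij1, hi1, hj1⟩ := two_leaves (hP F1 hF1)
    obtain ⟨i2, j2, hij2, hi2, hj2⟩ := two_leaves (hP F2 hF2)
    have d1 : i2 ≠ i1 := fun e => Finset.disjoint_left.mp hdisj
      (Finset.mem_coe.mp hi1) (e ▸ Finset.mem_coe.mp hi2 : Sum.inr i1 ∈ F2)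
    have d2 : i2 ≠ j1 := fun e => Finset.disjoint_left.mp hdisj
      (Finset.mem_coe.mp hj1) (e ▸ Finset.mem_coe.mp hi2 : Sum.inr j1 ∈ F2)
    have d3 : j2 ≠ i1 := fun e => Finset.disjoint_left.mp hdisj
      (Finset.mem_coe.mp hi1) (e ▸ Finset.mem_coe.mp hj2 : Sum.inr i1 ∈ F2)
    have d4 : j2 ≠ j1 := fun e => Finset.disjoint_left.mp hdisj
      (Finset.mem_coe.mp hj1) (e ▸ Finset.mem_coe.mp hj2 : Sum.inr j1 ∈ F2)
    have v1 : i1.val ≠ j1.val := fun e => hij1 (Fin.val_injective e)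
    have v2 : i2.val ≠ j2.val := fun e => hij2 (Fin.val_injective e)
    have w1 : i2.val ≠ i1.val := fun e => d1 (Fin.val_injective e)
    have w2 : i2.val ≠ j1.val := fun e => d2 (Fin.val_injective e)
    have w3 : j2.val ≠ i1.val := fun e => d3 (Fin.val_injective e)
    have w4 : j2.val ≠ j1.val := fun e => d4 (Fin.val_injective e)
    have := i1.isLt; have := j1.isLt; have := i2.isLt; have := j2.isLt
    omega
  have hfixatic : fixaticNumber G13 = 1 :=
    le_antisymm (csSup_le ⟨1, h1⟩ hub) (le_csSup ⟨1, fun k hk => hub k hk⟩ h1)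
  refine ⟨hfixatic, hfix, ?_⟩
  have hcard : Fintype.card (Fin 1 ⊕ Fin 3) = 4 := by simp
  rw [hfix, hcard]
  norm_num
end

section
/- For any two finite connected graphs G₁ and G₂, fix(G₁ + G₂) ≥ fix(G₁) + fix(G₂), where G₁ + G₂ denotes the join. -/
open SimpleGraph

def joinGraph {V₁ V₂ : Type*} (G₁ : SimpleGraph V₁) (G₂ : SimpleGraph V₂) :
    SimpleGraph (V₁ ⊕ V₂) where
  Adj x y :=
    match x, y with
    | .inl a, .inl b => G₁.Adj a b
    | .inr a, .inr b => G₂.Adj a b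
    | .inl _, .inr _ => True
    | .inr _, .inl _ => True
  symm := by
    constructor
    rintro (a | a) (b | b) h
    · exact G₁.adj_symm h
    · trivial
    · trivial
    · exact G₂.adj_symm h
  loopless := by
    constructor
    rintro (a | a) h
    · exact G₁.irrefl h
    · exact G₂.irrefl h

def extLeft {V₁ V₂ : Type*} {G₁ : SimpleGraph V₁} {G₂ : SimpleGraph V₂}
    (φ : G₁ ≃g G₁) : joinGraph G₁ G₂ ≃g joinGraph G₁ G₂ where
  toEquiv := Equiv.sumCongr φ.toEquiv (Equiv.refl V₂)
  map_rel_iff' := by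
    rintro (a | a) (b | b) <;> simp [joinGraph, Equiv.sumCongr, φ.map_rel_iff]

def extRight {V₁ V₂ : Type*} {G₁ : SimpleGraph V₁} {G₂ : SimpleGraph V₂}
    (φ : G₂ ≃g G₂) : joinGraph G₁ G₂ ≃g joinGraph G₁ G₂ where
  toEquiv := Equiv.sumCongr (Equiv.refl V₁) φ.toEquiv
  map_rel_iff' := by
    rintro (a | a) (b | b) <;> simp [joinGraph, Equiv.sumCongr, φ.map_rel_iff]

lemma fixing_toLeft {V₁ V₂ : Type*} {G₁ : SimpleGraph V₁} {G₂ : SimpleGraph V₂}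
    (F : Finset (V₁ ⊕ V₂)) (hF : IsFixingSet (joinGraph G₁ G₂) ↑F) :
    IsFixingSet G₁ ↑F.toLeft := by
  intro φ hφ a
  have key : ∀ v, (extLeft (G₂ := G₂) φ) v = v := by
    apply hF
    rintro (b | b) hv
    · have : b ∈ F.toLeft := Finset.mem_toLeft.mpr hv
      have := hφ b (by simpa using this)
      simp [extLeft, this]
    · simp [extLeft]
  have := key (.inl a)
  simpa [extLeft] using this

lemma fixing_toRight {V₁ V₂ : Type*} {G₁ : SimpleGraph V₁} {G₂ : SimpleGraph V₂}
    (F : Finset (V₁ ⊕ V₂)) (hF : IsFixingSet (joinGraph G₁ G₂) ↑F) :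
    IsFixingSet G₂ ↑F.toRight := by
  intro φ hφ a
  have key : ∀ v, (extRight (G₁ := G₁) φ) v = v := by
    apply hF
    rintro (b | b) hv
    · simp [extRight]
    · have : b ∈ F.toRight := Finset.mem_toRight.mpr hv
      have := hφ b (by simpa using this)
      simp [extRight, this]
  have := key (.inr a)
  simpa [extRight] using this

theorem stmt14 {V₁ V₂ : Type*} [Fintype V₁] [Fintype V₂]
    (G₁ : SimpleGraph V₁) (G₂ : SimpleGraph V₂)
    (h₁ : G₁.Connected) (h₂ : G₂.Connected) :
    fixingNumber (joinGraph G₁ G₂) ≥ fixingNumber G₁ + fixingNumber G₂ := by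
  have hne : {n | ∃ F : Finset (V₁ ⊕ V₂), F.card = n ∧ IsFixingSet (joinGraph G₁ G₂) ↑F}.Nonempty := by
    refine ⟨Finset.univ.card, Finset.univ, rfl, ?_⟩
    intro φ hφ v
    exact hφ v (Finset.mem_coe.mpr (Finset.mem_univ v))
  obtain ⟨F, hcard, hF⟩ := Nat.sInf_mem hne
  rw [fixingNumber, ← hcard] at *
  have h1 : fixingNumber G₁ ≤ F.toLeft.card :=
    Nat.sInf_le ⟨F.toLeft, rfl, fixing_toLeft F hF⟩
  have h2 : fixingNumber G₂ ≤ F.toRight.card :=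
    Nat.sInf_le ⟨F.toRight, rfl, fixing_toRight F hF⟩
  calc fixingNumber G₁ + fixingNumber G₂ ≤ F.toLeft.card + F.toRight.card := by omega
    _ = F.card := Finset.card_toLeft_add_card_toRight
end

section
/- Let G be a finite connected graph with nontrivial automorphism group. If fix(G) = F_xt(G), then no class of any fixatic partition of V(G) is a singleton. -/
open SimpleGraph

theorem stmt16 {V : Type*} [Fintype V] [DecidableEq V] (G : SimpleGraph V)
    (hG : G.Connected) (hsym : ∃ φ : G ≃g G, ∃ v, φ v ≠ v)
    (h : fixingNumber G = fixaticNumber G) :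
    ∀ P : Finpartition (Finset.univ : Finset V), IsFixaticPartition G P →
      ∀ F ∈ P.parts, F.card ≠ 1 := by
  intro P hP F hF hcard
  obtain ⟨φ, v, hv⟩ := hsym
  have hFfix : IsFixingSet G ↑F := hP F hF
  set S := {n | ∃ F : Finset V, F.card = n ∧ IsFixingSet G ↑F} with hS
  have h1 : 1 ∈ S := ⟨F, hcard, hFfix⟩
  have h0 : 0 ∉ S := by
    rintro ⟨E, hE0, hEfix⟩
    rw [Finset.card_eq_zero] at hE0
    subst hE0
    exact hv (hEfix φ (by simp) v)
  have hmem : sInf S ∈ S := Nat.sInf_mem ⟨1, h1⟩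
  have hle1 : sInf S ≤ 1 := Nat.sInf_le h1
  have hne0 : sInf S ≠ 0 := fun hz => h0 (hz ▸ hmem)
  have hfix1 : fixingNumber G = 1 := le_antisymm hle1 (Nat.one_le_iff_ne_zero.mpr hne0)
  have hbdd : BddAbove {k | ∃ P : Finpartition (Finset.univ : Finset V),
      IsFixaticPartition G P ∧ P.parts.card = k} := by
    refine ⟨Fintype.card V, ?_⟩
    rintro k ⟨Q, _, rfl⟩
    simpa using Q.card_parts_le_card
  have hle : P.parts.card ≤ fixaticNumber G := le_csSup hbdd ⟨P, hP, rfl⟩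
  rw [← h, hfix1] at hle
  have hpos : 0 < P.parts.card := Finset.card_pos.mpr ⟨F, hF⟩
  have hcard1 : P.parts.card = 1 := le_antisymm hle hpos
  obtain ⟨F', hF'⟩ := Finset.card_eq_one.mp hcard1
  have hFF' : F = F' := by rw [hF'] at hF; simpa using hF
  subst hFF'
  have hsup : P.parts.sup id = Finset.univ := P.sup_parts
  rw [hF'] at hsup
  simp only [Finset.sup_singleton, id] at hsup
  have hcardV : Fintype.card V = 1 := by
    rw [← Finset.card_univ, ← hsup, hcard]
  have : Subsingleton V := Fintype.card_le_one_iff_subsingleton.mp hcardV.le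
  exact hv (Subsingleton.elim _ _)
end
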